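/- Let m ≥ 2 be a positive integer and let S_m be the set of positive integers all of whose prime factors divide m. For every positive integer n, real β > 1, and real γ > 0, ∑_{k ∈ S_m} σ_{-γ}(n;k)·λ(k)/k^β = ∏_{j=0}^{n-1} 1/σ_{-(β+jγ)}(rad(m)), where λ is the Liouville function and rad(m) is the radical of m. -/

import Mathlib

noncomputable def sigmaNeg (γ : ℝ) (k : ℕ) : ℝ := ∑ d ∈ k.divisors, (d : ℝ) ^ (-γ)

/-- The radical of `k`: the product of the distinct primes dividing `k`. -/
def rad (k : ℕ) : ℕ := ∏ p ∈ k.primeFactors, p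

/-- The D-shifted factorial σ_{-γ}(a;k): equal to `1` when `a = 1` (empty product),
and to `∏_{j=0}^{a-2} σ_{-γ}(k·rad(k)^j)/σ_{-γ}(rad(k)^j)` otherwise. -/
noncomputable def Dfac (γ : ℝ) (a k : ℕ) : ℝ :=
  ∏ j ∈ Finset.range (a - 1), sigmaNeg γ (k * rad k ^ j) / sigmaNeg γ (rad k ^ j)

/-- The Liouville function λ(k) = (-1)^{Ω(k)}. -/
noncomputable def liouville (k : ℕ) : ℝ := (-1) ^ (ArithmeticFunction.cardFactors k)


open ArithmeticFunction in
noncomputable def rpowAF (γ : ℝ) : ArithmeticFunction ℝ :=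
  ⟨fun d => if d = 0 then 0 else (d : ℝ) ^ (-γ), by simp⟩

open ArithmeticFunction in
lemma rpowAF_mult (γ : ℝ) : (rpowAF γ).IsMultiplicative := by
  constructor
  · simp [rpowAF]
  · intro m n _
    rcases eq_or_ne m 0 with rfl | hm; · simp [rpowAF]
    rcases eq_or_ne n 0 with rfl | hn; · simp [rpowAF]
    simp only [rpowAF, ArithmeticFunction.coe_mk, mul_eq_zero, hm, hn, if_neg, or_self,
      if_neg hm, if_neg hn, Nat.cast_mul]
    rw [if_neg (by simp), if_neg (by simp), if_neg (by simp), Real.mul_rpow (by positivity) (by positivity)]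

open ArithmeticFunction ArithmeticFunction.zeta in
lemma sigmaNeg_eq (γ : ℝ) (k : ℕ) (hk : k ≠ 0) : sigmaNeg γ k = (↑ζ * rpowAF γ) k := by
  rw [coe_zeta_mul_apply]
  refine Finset.sum_congr rfl fun d hd => ?_
  rw [Nat.mem_divisors] at hd
  have hd0 : d ≠ 0 := by rintro rfl; exact hd.2 (zero_dvd_iff.mp hd.1)
  simp [rpowAF, hd0]

open ArithmeticFunction in
lemma sigmaNeg_mul (γ : ℝ) {x y : ℕ} (hx : x ≠ 0) (hy : y ≠ 0) (h : x.Coprime y) :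
    sigmaNeg γ (x * y) = sigmaNeg γ x * sigmaNeg γ y := by
  rw [sigmaNeg_eq γ _ (mul_ne_zero hx hy), sigmaNeg_eq γ _ hx, sigmaNeg_eq γ _ hy,
    (isMultiplicative_zeta.natCast.mul (rpowAF_mult γ)).map_mul_of_coprime h]

lemma sigmaNeg_one (γ : ℝ) : sigmaNeg γ 1 = 1 := by simp [sigmaNeg]

lemma sigmaNeg_prime_pow {p : ℕ} (hp : p.Prime) (γ : ℝ) (k : ℕ) :
    sigmaNeg γ (p ^ k) = ∑ i ∈ Finset.range (k+1), ((p:ℝ) ^ (-γ))^i := by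
  rw [sigmaNeg, Nat.sum_divisors_prime_pow hp]
  refine Finset.sum_congr rfl fun i _ => ?_
  have hp0 : (0:ℝ) < p := by exact_mod_cast hp.pos
  rw [Nat.cast_pow, ← Real.rpow_natCast (p:ℝ) i, ← Real.rpow_mul hp0.le,
    ← Real.rpow_natCast ((p:ℝ) ^ (-γ)) i, ← Real.rpow_mul hp0.le]
  ring_nf

lemma sigmaNeg_prime_pow' {p : ℕ} (hp : p.Prime) {γ : ℝ} (hγ : 0 < γ) (k : ℕ) :
    sigmaNeg γ (p ^ k) = (1 - ((p:ℝ)^(-γ))^(k+1)) / (1 - (p:ℝ)^(-γ)) := by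
  have hp1 : (1:ℝ) < p := by exact_mod_cast hp.one_lt
  have hq1 : (p:ℝ) ^ (-γ) < 1 := by
    rw [Real.rpow_neg (by linarith), inv_lt_one_iff₀]
    right
    exact Real.one_lt_rpow_iff_of_pos (by linarith) |>.mpr (Or.inl ⟨hp1, hγ⟩)
  rw [sigmaNeg_prime_pow hp γ k, geom_sum_eq (by linarith) (k+1)]
  rw [div_eq_div_iff (by linarith) (by linarith)]
  ring

lemma rad_ne_zero {k : ℕ} : rad k ≠ 0 :=
  Finset.prod_ne_zero_iff.mpr fun p hp => (Nat.prime_of_mem_primeFactors hp).ne_zero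

lemma primeFactors_rad {k : ℕ} : (rad k).primeFactors = k.primeFactors :=
  Nat.primeFactors_prod fun p hp => Nat.prime_of_mem_primeFactors hp

lemma rad_one : rad 1 = 1 := by simp [rad]

lemma rad_prime_pow {p : ℕ} (hp : p.Prime) {a : ℕ} (ha : a ≠ 0) : rad (p ^ a) = p := by
  rw [rad, Nat.primeFactors_pow p ha, hp.primeFactors, Finset.prod_singleton]

lemma rpow_neg_pos {p : ℕ} (hp : p.Prime) (γ : ℝ) : 0 < (p:ℝ)^(-γ) :=
  Real.rpow_pos_of_pos (by exact_mod_cast hp.pos) _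

lemma rpow_neg_lt_one {p : ℕ} (hp : p.Prime) {γ : ℝ} (hγ : 0 < γ) : (p:ℝ)^(-γ) < 1 := by
  have hp1 : (1:ℝ) < p := by exact_mod_cast hp.one_lt
  rw [Real.rpow_neg (by linarith), inv_lt_one_iff₀]
  right
  exact Real.one_lt_rpow_iff_of_pos (by linarith) |>.mpr (Or.inl ⟨hp1, hγ⟩)

noncomputable def cfun (q : ℝ) (n a : ℕ) : ℝ :=
  ∏ j ∈ Finset.range (n-1), (1 - q^(a+j+1))/(1 - q^(j+1))

lemma Dfac_one (γ : ℝ) (n : ℕ) : Dfac γ n 1 = 1 := by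
  simp [Dfac, rad_one, sigmaNeg_one]

lemma Dfac_prime_pow {p : ℕ} (hp : p.Prime) {γ : ℝ} (hγ : 0 < γ) (n a : ℕ) :
    Dfac γ n (p ^ a) = cfun ((p:ℝ)^(-γ)) n a := by
  set q := (p:ℝ)^(-γ) with hq
  have hq0 : 0 < q := rpow_neg_pos hp γ
  have hq1 : q < 1 := rpow_neg_lt_one hp hγ
  rcases Nat.eq_zero_or_pos a with rfl | ha
  · rw [pow_zero, Dfac_one, cfun]
    exact (Finset.prod_eq_one fun j _ => by
      rw [Nat.zero_add, div_self (sub_pos.mpr (pow_lt_one₀ hq0.le hq1 j.succ_ne_zero)).ne']).symm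
  · unfold Dfac cfun
    refine Finset.prod_congr rfl fun j _ => ?_
    rw [rad_prime_pow hp ha.ne', ← pow_add,
      sigmaNeg_prime_pow' hp hγ (a + j), sigmaNeg_prime_pow' hp hγ j]
    have h1 : (1:ℝ) - q ≠ 0 := by linarith
    have h2 : (1:ℝ) - q^(j+1) ≠ 0 := (sub_pos.mpr (pow_lt_one₀ hq0.le hq1 j.succ_ne_zero)).ne'
    rw [← hq]
    field_simp

lemma coprime_shift {x y : ℕ} (hx : x ≠ 0) (hy : y ≠ 0) (h : x.Coprime y) (j : ℕ) :
    (x * rad x ^ j).Coprime (y * rad y ^ j) := by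
  have hradxy : (rad x).Coprime (rad y) := by
    rw [← Nat.disjoint_primeFactors rad_ne_zero rad_ne_zero, primeFactors_rad, primeFactors_rad]
    exact h.disjoint_primeFactors
  have hxrady : x.Coprime (rad y) := by
    rw [← Nat.disjoint_primeFactors hx rad_ne_zero, primeFactors_rad]
    exact h.disjoint_primeFactors
  have hradxy' : (rad x).Coprime y := by
    rw [← Nat.disjoint_primeFactors rad_ne_zero hy, primeFactors_rad]
    exact h.disjoint_primeFactors
  exact (h.mul_right (hxrady.pow_right j)).mul
    ((hradxy'.pow_left j).mul_right ((hradxy.pow_left j).pow_right j))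

lemma rad_mul {x y : ℕ} (hx : x ≠ 0) (hy : y ≠ 0) (h : x.Coprime y) :
    rad (x * y) = rad x * rad y := by
  rw [rad, rad, rad, Nat.primeFactors_mul hx hy, Finset.prod_union h.disjoint_primeFactors]

lemma Dfac_mul (γ : ℝ) (n : ℕ) {x y : ℕ} (hx : x ≠ 0) (hy : y ≠ 0) (h : x.Coprime y) :
    Dfac γ n (x * y) = Dfac γ n x * Dfac γ n y := by
  unfold Dfac
  rw [← Finset.prod_mul_distrib]
  refine Finset.prod_congr rfl fun j _ => ?_
  have e1 : x * y * rad (x*y) ^ j = (x * rad x ^ j) * (y * rad y ^ j) := by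
    rw [rad_mul hx hy h, mul_pow]; ring
  have hbase : (rad x).Coprime (rad y) := by
    rw [← Nat.disjoint_primeFactors rad_ne_zero rad_ne_zero, primeFactors_rad, primeFactors_rad]
    exact h.disjoint_primeFactors
  have hradxy : (rad x ^ j).Coprime (rad y ^ j) := Nat.Coprime.pow j j hbase
  rw [e1, sigmaNeg_mul γ (mul_ne_zero hx (pow_ne_zero _ rad_ne_zero))
      (mul_ne_zero hy (pow_ne_zero _ rad_ne_zero)) (coprime_shift hx hy h j),
    rad_mul hx hy h, mul_pow,
    sigmaNeg_mul γ (pow_ne_zero _ rad_ne_zero) (pow_ne_zero _ rad_ne_zero) hradxy,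
    div_mul_div_comm]

open ArithmeticFunction in
lemma liouville_mul {x y : ℕ} (hx : x ≠ 0) (hy : y ≠ 0) :
    _root_.liouville (x * y) = _root_.liouville x * _root_.liouville y := by
  rw [_root_.liouville, _root_.liouville, _root_.liouville, cardFactors_mul hx hy, pow_add]

noncomputable def gterm (γ β : ℝ) (n k : ℕ) : ℝ := Dfac γ n k * liouville k / (k:ℝ)^β

lemma gterm_one (γ β : ℝ) (n : ℕ) : gterm γ β n 1 = 1 := by
  simp [gterm, Dfac_one, liouville]

lemma gterm_mul (γ β : ℝ) (n : ℕ) {x y : ℕ} (hx : x ≠ 0) (hy : y ≠ 0) (h : x.Coprime y) :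
    gterm γ β n (x * y) = gterm γ β n x * gterm γ β n y := by
  unfold gterm
  rw [Dfac_mul γ n hx hy h, liouville_mul hx hy, Nat.cast_mul,
    Real.mul_rpow (by positivity) (by positivity)]
  field_simp

lemma gterm_factor (γ β : ℝ) (n : ℕ) {k : ℕ} (hk : k ≠ 0) {s : Finset ℕ}
    (hs : k.primeFactors ⊆ s) :
    gterm γ β n k = ∏ p ∈ s, gterm γ β n (p ^ k.factorization p) := by
  have hmul : ∀ x y : ℕ, x.Coprime y → gterm γ β n (x*y) = gterm γ β n x * gterm γ β n y := by
    intro x y h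
    rcases eq_or_ne x 0 with rfl | hx
    · have hy1 : y = 1 := by simpa using h
      subst hy1; rw [gterm_one, mul_one, mul_one]
    rcases eq_or_ne y 0 with rfl | hy
    · have hx1 : x = 1 := by simpa [Nat.coprime_zero_right] using h
      subst hx1; rw [gterm_one, one_mul, one_mul]
    exact gterm_mul γ β n hx hy h
  rw [Nat.multiplicative_factorization (gterm γ β n) hmul (gterm_one γ β n) hk]
  rw [Finsupp.prod]
  refine Finset.prod_subset (by rw [Nat.support_factorization]; exact hs) fun p _ hp => ?_
  rw [Finsupp.notMem_support_iff.mp hp, pow_zero, gterm_one]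

section qbin
variable {q t : ℝ}

lemma one_sub_pow_pos (hq0 : 0 < q) (hq1 : q < 1) (j : ℕ) : 0 < 1 - q^(j+1) := by
  have : q ^ (j+1) < 1 := pow_lt_one₀ hq0.le hq1 (Nat.succ_ne_zero j)
  linarith

lemma cfun_nonneg (hq0 : 0 < q) (hq1 : q < 1) (n a : ℕ) : 0 ≤ cfun q n a := by
  refine Finset.prod_nonneg fun j _ => div_nonneg ?_ (one_sub_pow_pos hq0 hq1 j).le
  have : q ^ (a+j+1) < 1 := pow_lt_one₀ hq0.le hq1 (by omega)
  linarith

lemma cfun_le (hq0 : 0 < q) (hq1 : q < 1) (n a : ℕ) :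
    cfun q n a ≤ ∏ j ∈ Finset.range (n-1), (1 - q^(j+1))⁻¹ := by
  refine Finset.prod_le_prod (fun j _ => div_nonneg ?_ (one_sub_pow_pos hq0 hq1 j).le)
    (fun j _ => ?_)
  · have : q ^ (a+j+1) < 1 := pow_lt_one₀ hq0.le hq1 (by omega)
    linarith
  · rw [div_le_iff₀ (one_sub_pow_pos hq0 hq1 j), inv_mul_cancel₀ (one_sub_pow_pos hq0 hq1 j).ne']
    have h1 : (0:ℝ) ≤ q ^ (a+j+1) := by positivity
    linarith

lemma cfun_zero (hq0 : 0 < q) (hq1 : q < 1) (n : ℕ) : cfun q n 0 = 1 := by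
  refine Finset.prod_eq_one fun j _ => ?_
  rw [Nat.zero_add, div_self (one_sub_pow_pos hq0 hq1 j).ne']

lemma cfun_one (a : ℕ) : cfun q 1 a = 1 := by simp [cfun]

lemma cfun_L1 (hq0 : 0 < q) (hq1 : q < 1) (m a : ℕ) :
    cfun q (m+1) (a+1) * (1 - q^(a+1)) = cfun q (m+1) a * (1 - q^(a+m+1)) := by
  have key : (∏ j ∈ Finset.range m, (1 - q^(a+(j+1)+1))) * (1 - q^(a+0+1))
      = (∏ j ∈ Finset.range m, (1 - q^(a+j+1))) * (1 - q^(a+m+1)) := by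
    rw [← Finset.prod_range_succ' (fun j => (1 - q^(a+j+1))) m,
      Finset.prod_range_succ (fun j => (1 - q^(a+j+1))) m]
  have hD : (∏ j ∈ Finset.range m, (1 - q^(j+1))) ≠ 0 :=
    Finset.prod_ne_zero_iff.mpr fun j _ => (one_sub_pow_pos hq0 hq1 j).ne'
  simp only [cfun, Nat.add_sub_cancel]
  rw [Finset.prod_div_distrib, Finset.prod_div_distrib]
  field_simp
  have e1 : ∀ j, a + 1 + j + 1 = a + (j+1) + 1 := by omega
  calc (∏ j ∈ Finset.range m, (1 - q ^ (a + 1 + j + 1))) * (1 - q ^ (a + 1))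
      = (∏ j ∈ Finset.range m, (1 - q^(a+(j+1)+1))) * (1 - q^(a+0+1)) := by
        simp only [e1]
    _ = (∏ j ∈ Finset.range m, (1 - q^(a+j+1))) * (1 - q^(a+m+1)) := key

lemma cfun_step (m a : ℕ) :
    cfun q (m+2) a = cfun q (m+1) a * ((1 - q^(a+m+1))/(1 - q^(m+1))) := by
  show (∏ j ∈ Finset.range (m+1), (1 - q^(a+j+1))/(1 - q^(j+1))) = _
  rw [Finset.prod_range_succ]
  simp [cfun]

lemma cfun_pascal (hq0 : 0 < q) (hq1 : q < 1) (m a : ℕ) :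
    cfun q (m+2) (a+1) = q^(m+1) * cfun q (m+2) a + cfun q (m+1) (a+1) := by
  have h1 := cfun_L1 hq0 hq1 m a
  have hm1 : (1 - q^(m+1)) ≠ 0 := (one_sub_pow_pos hq0 hq1 m).ne'
  rw [cfun_step m (a+1), cfun_step m a]
  field_simp
  have e2 : a + 1 + m + 1 = a + m + 2 := by omega
  rw [e2]
  linear_combination (q^(m+1)) * h1

lemma cfun_summable_abs (hq0 : 0 < q) (hq1 : q < 1) (ht : |t| < 1) (n : ℕ) :
    Summable (fun a => |cfun q n a * t^a|) := by
  refine Summable.of_nonneg_of_le (fun a => abs_nonneg _)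
    (fun a => ?_) (((summable_geometric_of_lt_one (abs_nonneg t) ht).mul_left
      (∏ j ∈ Finset.range (n-1), (1 - q^(j+1))⁻¹)))
  rw [abs_mul, abs_pow]
  refine mul_le_mul_of_nonneg_right ?_ (by positivity)
  rw [abs_of_nonneg (cfun_nonneg hq0 hq1 n a)]; exact cfun_le hq0 hq1 n a

lemma cfun_summable (hq0 : 0 < q) (hq1 : q < 1) (ht : |t| < 1) (n : ℕ) :
    Summable (fun a => cfun q n a * t^a) :=
  (summable_abs_iff).mp (cfun_summable_abs hq0 hq1 ht n)

theorem qbinom (hq0 : 0 < q) (hq1 : q < 1) (ht : |t| < 1) :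
    ∀ n, 1 ≤ n → ∑' a : ℕ, cfun q n a * t^a
      = ∏ j ∈ Finset.range n, (1 - t * q^j)⁻¹ := by
  have hne : ∀ j : ℕ, (1 - t * q^j) ≠ 0 := by
    intro j
    have h1 : |t * q^j| < 1 := by
      rw [abs_mul, abs_pow, abs_of_pos hq0]
      calc |t| * q^j ≤ |t| * 1 := by
            gcongr
            exact pow_le_one₀ hq0.le hq1.le
        _ < 1 := by simpa using ht
    have := abs_lt.mp h1
    intro h; linarith [this.2, this.1, (by linarith : t * q^j = 1)]
  intro n hn
  induction n, hn using Nat.le_induction with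
  | base =>
    rw [tsum_congr (fun a => by rw [cfun_one, one_mul]),
      tsum_geometric_of_abs_lt_one ht]
    simp
  | succ n hn IH =>
    obtain ⟨m, rfl⟩ : ∃ m, n = m + 1 := ⟨n - 1, by omega⟩
    -- F = sum for m+2, G = sum for m+1
    set F := ∑' a : ℕ, cfun q (m+2) a * t^a with hF
    set G := ∑' a : ℕ, cfun q (m+1) a * t^a with hG
    have hsum2 := cfun_summable hq0 hq1 ht (m+2)
    have hsum1 := cfun_summable hq0 hq1 ht (m+1)
    have hshift1 : Summable (fun a : ℕ => cfun q (m+1) (a+1) * t^(a+1)) :=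
      (summable_nat_add_iff (f := fun a => cfun q (m+1) a * t^a) 1).mpr hsum1
    have hterm : ∀ a : ℕ, cfun q (m+2) (a+1) * t^(a+1)
        = (q^(m+1) * t) * (cfun q (m+2) a * t^a) + cfun q (m+1) (a+1) * t^(a+1) := by
      intro a
      rw [cfun_pascal hq0 hq1 m a]
      ring
    have h0 : F = 1 + ∑' a : ℕ, cfun q (m+2) (a+1) * t^(a+1) := by
      rw [hF, Summable.tsum_eq_zero_add hsum2, cfun_zero hq0 hq1, pow_zero, mul_one]
    have h2 : ∑' a : ℕ, cfun q (m+2) (a+1) * t^(a+1)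
        = (q^(m+1) * t) * F + ∑' a : ℕ, cfun q (m+1) (a+1) * t^(a+1) := by
      rw [tsum_congr hterm, Summable.tsum_add ((hsum2.mul_left _)) hshift1, tsum_mul_left]
    have h3 : G = 1 + ∑' a : ℕ, cfun q (m+1) (a+1) * t^(a+1) := by
      rw [hG, Summable.tsum_eq_zero_add hsum1, cfun_zero hq0 hq1, pow_zero, mul_one]
    have hFeq : F = 1 + ((q^(m+1) * t) * F + (G - 1)) := by linarith
    have hne' : (1 - t * q^(m+1)) ≠ 0 := hne (m+1)
    have : F * (1 - t * q^(m+1)) = G := by linarith [hFeq]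
    rw [Finset.prod_range_succ, ← IH, ← this]
    field_simp

end qbin

section perprime
variable {β γ : ℝ} {n : ℕ}

lemma gterm_prime_pow_eq {p : ℕ} (hp : p.Prime) (hβ : 0 < β) (hγ : 0 < γ) (a : ℕ) :
    gterm γ β n (p ^ a) = cfun ((p:ℝ)^(-γ)) n a * (-(p:ℝ)^(-β))^a := by
  have hp0 : (0:ℝ) < p := by exact_mod_cast hp.pos
  rw [gterm, Dfac_prime_pow hp hγ n a, liouville,
    ArithmeticFunction.cardFactors_apply_prime_pow hp]
  rw [neg_pow ((p:ℝ)^(-β)) a]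
  have hx : ((p:ℝ)^(-β))^a = ((p^a : ℕ):ℝ)^(-β) := by
    rw [Nat.cast_pow, ← Real.rpow_natCast ((p:ℝ)^(-β)) a, ← Real.rpow_mul hp0.le,
      ← Real.rpow_natCast (p:ℝ) a, ← Real.rpow_mul hp0.le]
    ring_nf
  rw [hx, Real.rpow_neg (show (0:ℝ) ≤ ((p^a : ℕ):ℝ) by positivity) β, div_eq_mul_inv]
  ring

lemma gterm_prime_summable_abs {p : ℕ} (hp : p.Prime) (hβ : 0 < β) (hγ : 0 < γ) :
    Summable (fun a : ℕ => |gterm γ β n (p ^ a)|) := by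
  have h := cfun_summable_abs (q := (p:ℝ)^(-γ)) (t := -(p:ℝ)^(-β))
    (rpow_neg_pos hp γ) (rpow_neg_lt_one hp hγ)
    (by rw [abs_neg, abs_of_pos (rpow_neg_pos hp β)]; exact rpow_neg_lt_one hp hβ) n
  refine h.congr fun a => ?_
  rw [← gterm_prime_pow_eq hp hβ hγ a]

lemma gterm_prime_tsum {p : ℕ} (hp : p.Prime) (hβ : 0 < β) (hγ : 0 < γ) (hn : 1 ≤ n) :
    ∑' a : ℕ, gterm γ β n (p ^ a)
      = ∏ j ∈ Finset.range n, (1 + (p:ℝ)^(-(β + j * γ)))⁻¹ := by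
  have hp0 : (0:ℝ) < p := by exact_mod_cast hp.pos
  have hq0 := rpow_neg_pos hp γ
  have hq1 := rpow_neg_lt_one hp hγ
  have ht : |(-(p:ℝ)^(-β))| < 1 := by
    rw [abs_neg, abs_of_pos (rpow_neg_pos hp β)]; exact rpow_neg_lt_one hp hβ
  rw [tsum_congr (gterm_prime_pow_eq hp hβ hγ), qbinom hq0 hq1 ht n hn]
  refine Finset.prod_congr rfl fun j _ => ?_
  congr 1
  have : (p:ℝ)^(-β) * ((p:ℝ)^(-γ))^j = (p:ℝ)^(-(β + j * γ)) := by
    rw [← Real.rpow_natCast ((p:ℝ)^(-γ)) j, ← Real.rpow_mul hp0.le,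
      ← Real.rpow_add hp0]
    ring_nf
  rw [← this]; ring

lemma sigmaNeg_prod_primes (c : ℝ) (s : Finset ℕ) (hs : ∀ p ∈ s, p.Prime) :
    sigmaNeg c (∏ p ∈ s, p) = ∏ p ∈ s, (1 + (p:ℝ)^(-c)) := by
  induction s using Finset.induction_on with
  | empty => simp [sigmaNeg_one]
  | @insert p s hp ih =>
    rw [Finset.prod_insert hp, Finset.prod_insert hp]
    have hpp : p.Prime := hs p (Finset.mem_insert_self p s)
    have hsp : ∀ q ∈ s, q.Prime := fun q hq => hs q (Finset.mem_insert_of_mem hq)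
    have hcop : p.Coprime (∏ q ∈ s, q) := by
      rw [← Nat.disjoint_primeFactors hpp.ne_zero
        (Finset.prod_ne_zero_iff.mpr fun q hq => (hsp q hq).ne_zero),
        hpp.primeFactors, Nat.primeFactors_prod hsp]
      simpa using hp
    rw [sigmaNeg_mul c hpp.ne_zero
      (Finset.prod_ne_zero_iff.mpr fun q hq => (hsp q hq).ne_zero) hcop, ih hsp]
    congr 1
    have := sigmaNeg_prime_pow hpp c 1
    simpa [Finset.sum_range_succ] using this
end perprime

section mainind

def smEquiv (p : ℕ) (hp : p.Prime) (s : Finset ℕ) (hps : p ∉ s) :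
    (ℕ × {k : ℕ // 0 < k ∧ k.primeFactors ⊆ s})
      ≃ {k : ℕ // 0 < k ∧ k.primeFactors ⊆ insert p s} where
  toFun z := ⟨p ^ z.1 * z.2.1, by
    refine ⟨Nat.mul_pos (pow_pos hp.pos _) z.2.2.1, ?_⟩
    intro q hq
    rw [Nat.primeFactors_mul (pow_ne_zero _ hp.ne_zero) z.2.2.1.ne', Finset.mem_union] at hq
    rcases hq with hq | hq
    · rcases Nat.eq_zero_or_pos z.1 with h0 | h0
      · rw [h0, pow_zero] at hq; simp at hq
      · rw [Nat.primeFactors_pow p h0.ne', hp.primeFactors, Finset.mem_singleton] at hq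
        subst hq; exact Finset.mem_insert_self q s
    · exact Finset.mem_insert_of_mem (z.2.2.2 hq)⟩
  invFun k := ⟨k.1.factorization p, ⟨k.1 / p ^ k.1.factorization p, by
    refine ⟨Nat.ordCompl_pos p k.2.1.ne', ?_⟩
    intro q hq
    rw [Nat.mem_primeFactors] at hq
    obtain ⟨hq1, hq2, _⟩ := hq
    have hqk : q ∈ k.1.primeFactors :=
      Nat.mem_primeFactors.mpr ⟨hq1, hq2.trans (Nat.ordCompl_dvd _ _), k.2.1.ne'⟩
    have := k.2.2 hqk
    rw [Finset.mem_insert] at this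
    rcases this with rfl | h
    · exact absurd hq2 (Nat.not_dvd_ordCompl hp k.2.1.ne')
    · exact h⟩⟩
  left_inv := by
    rintro ⟨a, k, hk0, hks⟩
    have hpk : ¬ p ∣ k := by
      intro hdvd
      exact hps (hks (Nat.mem_primeFactors.mpr ⟨hp, hdvd, hk0.ne'⟩))
    have hfac : (p ^ a * k).factorization p = a := by
      rw [Nat.factorization_mul (pow_ne_zero _ hp.ne_zero) hk0.ne', Finsupp.add_apply,
        hp.factorization_pow, Finsupp.single_eq_same,
        Nat.factorization_eq_zero_of_not_dvd hpk, add_zero]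
    simp only [Prod.mk.injEq, Subtype.mk.injEq]
    refine ⟨hfac, ?_⟩
    rw [hfac, Nat.mul_div_cancel_left _ (pow_pos hp.pos a)]
  right_inv := by
    rintro ⟨k, hk0, hks⟩
    simp only [Subtype.mk.injEq]
    exact Nat.ordProj_mul_ordCompl_eq_self k p

lemma main_ind (g : ℕ → ℕ → ℝ) (hg0 : ∀ p, g p 0 = 1) :
    ∀ (s : Finset ℕ), (∀ p ∈ s, p.Prime) → (∀ p ∈ s, Summable fun a => |g p a|) →
    (Summable (fun k : {k : ℕ // 0 < k ∧ k.primeFactors ⊆ s} =>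
        |∏ p ∈ s, g p (k.1.factorization p)|))
    ∧ ∑' k : {k : ℕ // 0 < k ∧ k.primeFactors ⊆ s}, ∏ p ∈ s, g p (k.1.factorization p)
      = ∏ p ∈ s, ∑' a, g p a := by
  intro s
  induction s using Finset.induction_on with
  | empty =>
    intro _ _
    haveI : Unique {k : ℕ // 0 < k ∧ k.primeFactors ⊆ (∅ : Finset ℕ)} := by
      refine ⟨⟨⟨1, by simp⟩⟩, ?_⟩
      rintro ⟨k, hk1, hk2⟩
      have := Nat.primeFactors_eq_empty.mp (Finset.subset_empty.mp hk2)
      have hk : k = 1 := by omega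
      subst hk; rfl
    constructor
    · exact Summable.of_finite
    · rw [tsum_eq_single default (fun b hb => absurd (Subsingleton.elim b default) hb)]
      simp
  | @insert p s hps ih =>
    intro hprime hsum
    have hp : p.Prime := hprime p (Finset.mem_insert_self p s)
    have hsp : ∀ q ∈ s, q.Prime := fun q hq => hprime q (Finset.mem_insert_of_mem hq)
    obtain ⟨ihS, ihT⟩ := ih hsp (fun q hq => hsum q (Finset.mem_insert_of_mem hq))
    set E := smEquiv p hp s hps with hE
    set F : {k : ℕ // 0 < k ∧ k.primeFactors ⊆ insert p s} → ℝ :=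
      fun k => ∏ q ∈ insert p s, g q (k.1.factorization q) with hF
    set G : {k : ℕ // 0 < k ∧ k.primeFactors ⊆ s} → ℝ :=
      fun k => ∏ q ∈ s, g q (k.1.factorization q) with hG
    have hkey : ∀ z : ℕ × {k : ℕ // 0 < k ∧ k.primeFactors ⊆ s},
        F (E z) = g p z.1 * G z.2 := by
      rintro ⟨a, k, hk0, hks⟩
      have hpk : ¬ p ∣ k := fun hdvd =>
        hps (hks (Nat.mem_primeFactors.mpr ⟨hp, hdvd, hk0.ne'⟩))
      have hfacmul : ∀ q : ℕ, (p ^ a * k).factorization q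
          = (Finsupp.single p a) q + k.factorization q := by
        intro q
        rw [Nat.factorization_mul (pow_ne_zero _ hp.ne_zero) hk0.ne', Finsupp.add_apply,
          hp.factorization_pow]
      rw [hF, hG]
      simp only [hE, smEquiv, Equiv.coe_fn_mk]
      rw [Finset.prod_insert hps]
      congr 1
      · rw [hfacmul p, Finsupp.single_eq_same,
          Nat.factorization_eq_zero_of_not_dvd hpk, add_zero]
      · refine Finset.prod_congr rfl fun q hq => ?_
        rw [hfacmul q, Finsupp.single_eq_of_ne' (fun h => hps (by rwa [h])), zero_add]
    have hsump := hsum p (Finset.mem_insert_self p s)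
    have hsumprod : Summable (fun z : ℕ × {k : ℕ // 0 < k ∧ k.primeFactors ⊆ s} =>
        |g p z.1| * |G z.2|) := by
      refine summable_mul_of_summable_norm (f := fun a => |g p a|) (g := fun k => |G k|) ?_ ?_
      · simpa [Real.norm_eq_abs, abs_abs] using hsump
      · simpa [Real.norm_eq_abs, abs_abs] using ihS
    constructor
    · refine (E.summable_iff (f := fun k => |F k|)).mp (hsumprod.congr fun z => ?_)
      simp only [Function.comp_apply]
      rw [hkey z, abs_mul]
    · rw [← E.tsum_eq F, tsum_congr hkey, Finset.prod_insert hps, ← ihT]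
      exact (tsum_mul_tsum_of_summable_norm
        (by simpa [Real.norm_eq_abs] using hsump)
        (by simpa [Real.norm_eq_abs] using ihS)).symm

end mainind

theorem stmt9 (m : ℕ) (hm : 2 ≤ m) (n : ℕ) (hn : 1 ≤ n) (β γ : ℝ) (hβ : 1 < β) (hγ : 0 < γ) :
    ∑' k : {k : ℕ+ // ∀ p : ℕ, p.Prime → p ∣ (k : ℕ) → p ∣ m},
        Dfac γ n (k : ℕ+) * liouville (k : ℕ+) / ((k : ℕ+) : ℝ) ^ β =
      ∏ j ∈ Finset.range n, (sigmaNeg (β + j * γ) (rad m))⁻¹ := by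
  have hm0 : m ≠ 0 := by omega
  have hβ0 : (0:ℝ) < β := by linarith
  set s := m.primeFactors with hs
  have hsprime : ∀ p ∈ s, p.Prime := fun p hp => Nat.prime_of_mem_primeFactors hp
  set g : ℕ → ℕ → ℝ := fun p a => gterm γ β n (p ^ a) with hg
  have hg0 : ∀ p, g p 0 = 1 := fun p => by rw [hg]; simp only [pow_zero]; exact gterm_one γ β n
  have hgsum : ∀ p ∈ s, Summable fun a => |g p a| := fun p hp =>
    gterm_prime_summable_abs (hsprime p hp) hβ0 hγ
  -- the equivalence of index types
  let e : {k : ℕ+ // ∀ p : ℕ, p.Prime → p ∣ (k : ℕ) → p ∣ m}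
      ≃ {k : ℕ // 0 < k ∧ k.primeFactors ⊆ s} :=
    { toFun := fun k => ⟨(k.1 : ℕ), k.1.pos, fun q hq => by
        rw [Nat.mem_primeFactors] at hq
        exact Nat.mem_primeFactors.mpr ⟨hq.1, k.2 q hq.1 hq.2.1, hm0⟩⟩
      invFun := fun k => ⟨⟨k.1, k.2.1⟩, fun p hp hdvd => by
        have hmem : p ∈ k.1.primeFactors := Nat.mem_primeFactors.mpr ⟨hp, hdvd, k.2.1.ne'⟩
        exact Nat.dvd_of_mem_primeFactors (k.2.2 hmem)⟩
      left_inv := fun k => by ext; rfl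
      right_inv := fun k => by ext; rfl }
  have h1 : ∑' k : {k : ℕ+ // ∀ p : ℕ, p.Prime → p ∣ (k : ℕ) → p ∣ m},
      Dfac γ n (k : ℕ+) * liouville (k : ℕ+) / ((k : ℕ+) : ℝ) ^ β
      = ∑' k : {k : ℕ // 0 < k ∧ k.primeFactors ⊆ s},
          ∏ p ∈ s, g p (k.1.factorization p) := by
    rw [← e.symm.tsum_eq (fun k => Dfac γ n (k : ℕ+) * liouville (k : ℕ+) / ((k : ℕ+) : ℝ) ^ β)]
    refine tsum_congr fun k => ?_
    have : Dfac γ n ((e.symm k : ℕ+) : ℕ) * liouville ((e.symm k : ℕ+) : ℕ)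
        / (((e.symm k : ℕ+) : ℕ) : ℝ) ^ β = gterm γ β n k.1 := rfl
    rw [this, gterm_factor γ β n k.2.1.ne' k.2.2]
  rw [h1, (main_ind g hg0 s hsprime hgsum).2]
  have h2 : ∀ p ∈ s, ∑' a : ℕ, g p a
      = ∏ j ∈ Finset.range n, (1 + (p:ℝ)^(-(β + j * γ)))⁻¹ := fun p hp =>
    gterm_prime_tsum (hsprime p hp) hβ0 hγ hn
  rw [Finset.prod_congr rfl h2, Finset.prod_comm]
  refine Finset.prod_congr rfl fun j _ => ?_
  rw [Finset.prod_inv_distrib]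
  congr 1
  rw [rad, sigmaNeg_prod_primes (β + j * γ) s hsprime]
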